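/- Let n ≥ 2, R ≥ 2 and 1 ≤ c ≤ R − 1 be integers, and let n_{c+1}, …, n_R ≥ 1 be integers with Σ_{j=c+1}^R n_j = n which are not all equal. Let b be a real number with b_min < b < 1 and let a be a real number with a_min(b) < a < a_max(b). Then the vector p̂^{ab} satisfies: (i) 0 < p̂^{ab}_r < 1 for every r ∈ {1, …, R}; (ii) Σ_{r=1}^R p̂^{ab}_r = 1; and (iii) p̂^{ab}_i ≤ p̂^{ab}_j / n for every i ∈ {1, …, c} and every j ∈ {c+1, …, R}. -/

import Mathlib

open Finset

/-- Conditions (2.13) and (2.14) of the paper: if `b_min < b < 1` and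
`a_min(b) < a < a_max(b)`, then the corrected estimator `p̂^{ab}` is a
probability vector with entries strictly between `0` and `1` satisfying the
sufficient condition `p̂_i ≤ p̂_j / n` of Proposition 1. -/
theorem corrected_estimator_is_admissible
    (n R c : ℕ) (hn : 2 ≤ n) (hR : 2 ≤ R) (hc1 : 1 ≤ c) (hcR : c ≤ R - 1)
    (nj : ℕ → ℕ) (hnj : ∀ j ∈ Finset.Icc (c + 1) R, 1 ≤ nj j)
    (hnsum : ∑ j ∈ Finset.Icc (c + 1) R, nj j = n)
    (hne : ∃ j ∈ Finset.Icc (c + 1) R, ∃ j' ∈ Finset.Icc (c + 1) R, nj j ≠ nj j')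
    (nmin nmax : ℕ)
    (hminle : ∀ j ∈ Finset.Icc (c + 1) R, nmin ≤ nj j)
    (hminmem : ∃ j ∈ Finset.Icc (c + 1) R, nj j = nmin)
    (hmaxle : ∀ j ∈ Finset.Icc (c + 1) R, nj j ≤ nmax)
    (hmaxmem : ∃ j ∈ Finset.Icc (c + 1) R, nj j = nmax)
    (a b : ℝ)
    -- `b_min < b < 1`
    (hb₁ : max 0 (max
        (Real.log (((nmax : ℝ) * ((R : ℝ) - (c : ℝ)) - (n : ℝ)) / ((R : ℝ) - 1)) /
          Real.log n)
        (max
          (Real.log ((n : ℝ) - (nmin : ℝ) * ((R : ℝ) - (c : ℝ))) / Real.log n)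
          (Real.log ((nmax : ℝ) - (nmin : ℝ)) / Real.log n))) < b)
    (hb₂ : b < 1)
    -- `a_min(b) < a < a_max(b)`
    (ha₁ : max 0
        ((((nmax : ℝ) - (n : ℝ) ^ b) * ((R : ℝ) - (c : ℝ)) + (n : ℝ) ^ b) /
          ((c : ℝ) * (n : ℝ) ^ b)) < a)
    (ha₂ : a < min 1 (min
        (((n : ℝ) ^ b - ((n : ℝ) - (nmin : ℝ) * ((R : ℝ) - (c : ℝ)))) /
          ((c : ℝ) * (n : ℝ) ^ b))
        (((n : ℝ) ^ b - ((n : ℝ) - (nmin : ℝ) * ((R : ℝ) - (c : ℝ)))) /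
          ((n : ℝ) ^ b * ((n : ℝ) * ((R : ℝ) - (c : ℝ)) + (c : ℝ))))))
    -- the corrected estimator
    (phat : ℕ → ℝ)
    (hphat : ∀ r : ℕ, phat r =
      if r ≤ c then a
      else (nj r : ℝ) / (n : ℝ) ^ b -
        (a * (c : ℝ) + (n : ℝ) ^ (1 - b) - 1) / ((R : ℝ) - (c : ℝ))) :
    (∀ r ∈ Finset.Icc 1 R, 0 < phat r ∧ phat r < 1) ∧
      (∑ r ∈ Finset.Icc 1 R, phat r = 1) ∧
      (∀ i ∈ Finset.Icc 1 c, ∀ j ∈ Finset.Icc (c + 1) R,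
        phat i ≤ phat j / (n : ℝ)) := by
   -- basic positivity and cast facts
  have hcR' : c + 1 ≤ R := by omega
  have hn2 : (2:ℝ) ≤ (n:ℝ) := by exact_mod_cast hn
  have hn0 : (0:ℝ) < (n:ℝ) := by linarith
  have hN : (0:ℝ) < (n:ℝ) ^ b := Real.rpow_pos_of_pos hn0 b
  have hc0 : (0:ℝ) < (c:ℝ) := by exact_mod_cast hc1
  have hRc1 : (c:ℝ) + 1 ≤ (R:ℝ) := by exact_mod_cast hcR'
  have hRc0 : (0:ℝ) < (R:ℝ) - (c:ℝ) := by linarith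
  have hpow : (n:ℝ) ^ (1 - b) = (n:ℝ) / (n:ℝ) ^ b := by
    rw [Real.rpow_sub hn0, Real.rpow_one]
  have ha0 : 0 < a := lt_of_le_of_lt (le_max_left _ _) ha₁
  have haX : ((nmax : ℝ) - (n:ℝ)^b) * ((R:ℝ) - (c:ℝ)) + (n:ℝ)^b
      < a * ((c:ℝ) * (n:ℝ)^b) := by
    have h := lt_of_le_of_lt (le_max_right _ _) ha₁
    exact (div_lt_iff₀ (by positivity)).mp h
  have ha2 : a < 1 := lt_of_lt_of_le ha₂ (min_le_left _ _)
  have ha3 : a * ((c:ℝ) * (n:ℝ)^b)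
      < (n:ℝ)^b - ((n:ℝ) - (nmin:ℝ) * ((R:ℝ) - (c:ℝ))) := by
    have h := lt_of_lt_of_le ha₂ ((min_le_right _ _).trans (min_le_left _ _))
    exact (lt_div_iff₀ (by positivity)).mp h
  have ha4 : a * ((n:ℝ)^b * ((n:ℝ) * ((R:ℝ) - (c:ℝ)) + (c:ℝ)))
      < (n:ℝ)^b - ((n:ℝ) - (nmin:ℝ) * ((R:ℝ) - (c:ℝ))) := by
    have h := lt_of_lt_of_le ha₂ ((min_le_right _ _).trans (min_le_right _ _))
    have hpos : (0:ℝ) < (n:ℝ)^b * ((n:ℝ) * ((R:ℝ) - (c:ℝ)) + (c:ℝ)) := by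
      apply mul_pos hN; nlinarith
    exact (lt_div_iff₀ hpos).mp h
  have key : ∀ j : ℕ, c < j → phat j =
      ((nj j : ℝ) * ((R:ℝ) - (c:ℝ)) -
        (a * (c:ℝ) * (n:ℝ)^b + (n:ℝ) - (n:ℝ)^b)) /
        ((n:ℝ)^b * ((R:ℝ) - (c:ℝ))) := by
    intro j hj
    rw [hphat, if_neg (by omega), hpow]
    field_simp
  refine ⟨?_, ?_, ?_⟩
  · -- (i) 0 < phat r < 1
    intro r hr
    rw [mem_Icc] at hr
    by_cases hrc : r ≤ c
    · rw [hphat, if_pos hrc]; exact ⟨ha0, ha2⟩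
    · push_neg at hrc
      have hmem : r ∈ Finset.Icc (c+1) R := mem_Icc.mpr ⟨by omega, hr.2⟩
      have hnmin : (nmin:ℝ) ≤ (nj r : ℝ) := by exact_mod_cast hminle r hmem
      have hnmax : (nj r : ℝ) ≤ (nmax:ℝ) := by exact_mod_cast hmaxle r hmem
      rw [key r hrc]
      have hmin' : (nmin:ℝ) * ((R:ℝ) - (c:ℝ)) ≤ (nj r : ℝ) * ((R:ℝ) - (c:ℝ)) :=
        mul_le_mul_of_nonneg_right hnmin hRc0.le
      have hmax' : (nj r : ℝ) * ((R:ℝ) - (c:ℝ)) ≤ (nmax:ℝ) * ((R:ℝ) - (c:ℝ)) :=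
        mul_le_mul_of_nonneg_right hnmax hRc0.le
      constructor
      · apply div_pos _ (mul_pos hN hRc0)
        nlinarith [ha3]
      · rw [div_lt_one (mul_pos hN hRc0)]
        nlinarith [haX]
  · -- (ii) the entries sum to 1
    have hNe : (n:ℝ)^b ≠ 0 := ne_of_gt hN
    have hRcne : (R:ℝ) - (c:ℝ) ≠ 0 := ne_of_gt hRc0
    have hIcc : Finset.Icc 1 R = Finset.Ioc 0 R := by
      rw [← Finset.Icc_add_one_left_eq_Ioc]
      rfl
    rw [hIcc, ← Finset.sum_Ioc_consecutive phat (Nat.zero_le c) (by omega : c ≤ R)]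
    have h1 : ∑ r ∈ Finset.Ioc 0 c, phat r = (c:ℝ) * a := by
      rw [Finset.sum_congr rfl (fun r hr => by
        rw [hphat, if_pos (Finset.mem_Ioc.mp hr).2]),
        Finset.sum_const, Nat.card_Ioc, Nat.sub_zero, nsmul_eq_mul]
    have h2 : ∑ r ∈ Finset.Ioc c R, phat r =
        (n:ℝ) / (n:ℝ)^b - ((R:ℝ) - (c:ℝ)) *
          ((a * (c:ℝ) + (n:ℝ) / (n:ℝ)^b - 1) / ((R:ℝ) - (c:ℝ))) := by
      rw [Finset.sum_congr rfl (fun r hr => by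
        rw [hphat, if_neg (by have := (Finset.mem_Ioc.mp hr).1; omega), hpow])]
      rw [Finset.sum_sub_distrib, ← Finset.sum_div, Finset.sum_const,
        Nat.card_Ioc, nsmul_eq_mul]
      have hsum : ∑ r ∈ Finset.Ioc c R, (nj r : ℝ) = (n:ℝ) := by
        rw [← Finset.Icc_add_one_left_eq_Ioc, ← Nat.cast_sum]
        exact_mod_cast congrArg (Nat.cast : ℕ → ℝ) hnsum
      have hcard : ((R - c : ℕ) : ℝ) = (R:ℝ) - (c:ℝ) := by
        rw [Nat.cast_sub (by omega : c ≤ R)]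
      rw [hsum, hcard]
    rw [h1, h2]
    field_simp
    ring
  · -- (iii) phat i ≤ phat j / n
    intro i hi j hj
    rw [mem_Icc] at hi hj
    have hmem : j ∈ Finset.Icc (c+1) R := mem_Icc.mpr ⟨hj.1, hj.2⟩
    have hnmin : (nmin:ℝ) ≤ (nj j : ℝ) := by exact_mod_cast hminle j hmem
    have hmin' : (nmin:ℝ) * ((R:ℝ) - (c:ℝ)) ≤ (nj j : ℝ) * ((R:ℝ) - (c:ℝ)) :=
      mul_le_mul_of_nonneg_right hnmin hRc0.le
    rw [hphat i, if_pos hi.2, key j (by omega), div_div,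
      le_div_iff₀ (by positivity)]
    linarith [ha4]
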